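/- Let C_a and C_b be comparator networks on n channels of the same size such that C_a subsumes C_b. If there exists a sorting network of the form C_b;C of size k, then there also exists a sorting network of the form C_a;C' of size k. -/

import Mathlib

/-- Applying a single comparator `c = (i, j)`: the minimum of the two values goes to
channel `i` and the maximum to channel `j`. -/
def applyComp {n : ℕ} {α : Type*} [LinearOrder α] (c : Fin n × Fin n) (x : Fin n → α) :
    Fin n → α :=
  fun k => if k = c.1 then min (x c.1) (x c.2)
    else if k = c.2 then max (x c.1) (x c.2)
    else x k

/-- Propagating an input vector through a comparator network (a list of comparators). -/
def runNet {n : ℕ} {α : Type*} [LinearOrder α] (C : List (Fin n × Fin n)) (x : Fin n → α) :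
    Fin n → α :=
  C.foldl (fun v c => applyComp c v) x

/-- A standard comparator network: every comparator `(i, j)` satisfies `i < j`. -/
def Standard {n : ℕ} (C : List (Fin n × Fin n)) : Prop :=
  ∀ c ∈ C, c.1 < c.2

/-- A sorting network: a standard comparator network sorting every Boolean input. -/
def IsSortingNet {n : ℕ} (C : List (Fin n × Fin n)) : Prop :=
  Standard C ∧ ∀ x : Fin n → Bool, Monotone (runNet C x)

/-- The set of outputs of a comparator network on Boolean inputs. -/
def outputs {n : ℕ} (C : List (Fin n × Fin n)) : Set (Fin n → Bool) :=
  Set.range (runNet C)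

/-- The action of a permutation of channels on a set of Boolean vectors. -/
def permSet {n : ℕ} (π : Equiv.Perm (Fin n)) (S : Set (Fin n → Bool)) :
    Set (Fin n → Bool) :=
  (fun x => x ∘ ⇑π.symm) '' S

/-- `Ca` subsumes `Cb`: some permutation maps `outputs Ca` into `outputs Cb`. -/
def Subsumes {n : ℕ} (Ca Cb : List (Fin n × Fin n)) : Prop :=
  ∃ π : Equiv.Perm (Fin n), permSet π (outputs Ca) ⊆ outputs Cb

/-- `sortSize n` is the least size of a sorting network on `n` channels. -/
noncomputable def sortSize (n : ℕ) : ℕ :=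
  sInf {k | ∃ C : List (Fin n × Fin n), IsSortingNet C ∧ C.length = k}

/-- Number of ones in a Boolean vector. -/
def ones {n : ℕ} (x : Fin n → Bool) : ℕ :=
  (Finset.univ.filter fun i => x i = true).card

/-- A (finite) complete set of filters on `n` channels. -/
def CompleteFilters (n : ℕ) (F : Finset (List (Fin n × Fin n))) : Prop :=
  (∃ C : List (Fin n × Fin n), IsSortingNet C ∧ C.length = sortSize n) ↔
    (∃ C ∈ F, ∃ C' : List (Fin n × Fin n),
      IsSortingNet (C ++ C') ∧ (C ++ C').length = sortSize n)

/-- `wSet C x k` is the set of positions `i` such that some output vector of `C`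
with exactly `k` ones has value `x` at position `i`. -/
def wSet {n : ℕ} (C : List (Fin n × Fin n)) (x : Bool) (k : ℕ) : Set (Fin n) :=
  {i | ∃ v ∈ outputs C, ones v = k ∧ v i = x}

section Aux

variable {n : ℕ}

lemma runNet_nil {α : Type*} [LinearOrder α] (x : Fin n → α) :
    runNet ([] : List (Fin n × Fin n)) x = x := rfl

lemma runNet_cons {α : Type*} [LinearOrder α] (c : Fin n × Fin n)
    (C : List (Fin n × Fin n)) (x : Fin n → α) :
    runNet (c :: C) x = runNet C (applyComp c x) := rfl

lemma runNet_append {α : Type*} [LinearOrder α] (A B : List (Fin n × Fin n)) (x : Fin n → α) :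
    runNet (A ++ B) x = runNet B (runNet A x) := by
  simp [runNet, List.foldl_append]

lemma applyComp_map (c : Fin n × Fin n) (e : Equiv.Perm (Fin n)) (x : Fin n → Bool) :
    applyComp (e c.1, e c.2) x = (applyComp c (x ∘ ⇑e)) ∘ ⇑e.symm := by
  funext k
  simp only [applyComp, Function.comp_apply]
  by_cases h1 : k = e c.1
  · have h1' : e.symm k = c.1 := by rw [h1, Equiv.symm_apply_apply]
    simp [h1, h1']
  · have h1' : e.symm k ≠ c.1 := fun h => h1 (by rw [← h, Equiv.apply_symm_apply])
    by_cases h2 : k = e c.2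
    · have h2' : e.symm k = c.2 := by rw [h2, Equiv.symm_apply_apply]
      simp [h1, h2, h1', h2']
    · have h2' : e.symm k ≠ c.2 := fun h => h2 (by rw [← h, Equiv.apply_symm_apply])
      simp [h1, h2, h1', h2', Equiv.apply_symm_apply]

lemma runNet_map (e : Equiv.Perm (Fin n)) (C : List (Fin n × Fin n)) (x : Fin n → Bool) :
    runNet (C.map fun c => (e c.1, e c.2)) x = (runNet C (x ∘ ⇑e)) ∘ ⇑e.symm := by
  induction C generalizing x with
  | nil =>
      funext kk
      simp [runNet, Equiv.apply_symm_apply]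
  | cons c C ih =>
      simp only [List.map_cons, runNet_cons]
      rw [applyComp_map, ih]
      have hcomp : ((applyComp c (x ∘ ⇑e)) ∘ ⇑e.symm) ∘ ⇑e = applyComp c (x ∘ ⇑e) := by
        funext kk; simp
      rw [hcomp]

lemma applyComp_swap (c : Fin n × Fin n) (x : Fin n → Bool) :
    applyComp (c.2, c.1) x = (applyComp c x) ∘ ⇑(Equiv.swap c.1 c.2) := by
  funext k
  simp only [applyComp, Function.comp_apply]
  by_cases h2 : k = c.2
  · by_cases h1 : k = c.1
    · have hc : c.1 = c.2 := h1 ▸ h2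
      simp [h1, h2, hc, Equiv.swap_apply_left, min_comm]
    · have hs : Equiv.swap c.1 c.2 k = c.1 := by rw [h2, Equiv.swap_apply_right]
      simp [h2, hs, min_comm]
  · by_cases h1 : k = c.1
    · have hs : Equiv.swap c.1 c.2 k = c.2 := by rw [h1, Equiv.swap_apply_left]
      have hne : c.2 ≠ c.1 := fun h => h2 (h1.trans h.symm)
      simp [h1, h2, hs, hne, max_comm]
      intro hcc
      exact absurd hcc.symm hne
    · have hs : Equiv.swap c.1 c.2 k = k := Equiv.swap_apply_of_ne_of_ne h1 h2
      simp [h1, h2, hs]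

lemma untangle : ∀ (m : ℕ) (G : List (Fin n × Fin n)), G.length = m →
    (∀ c ∈ G, c.1 ≠ c.2) →
    ∃ (G' : List (Fin n × Fin n)) (ρ : Equiv.Perm (Fin n)), Standard G' ∧
      G'.length = G.length ∧ ∀ x : Fin n → Bool, runNet G' x = (runNet G x) ∘ ⇑ρ := by
  intro m
  induction m using Nat.strong_induction_on with
  | _ m ih =>
    intro G hlen hdist
    cases G with
    | nil =>
        exact ⟨[], Equiv.refl _, fun c hc => absurd hc List.not_mem_nil,
          rfl, fun x => rfl⟩
    | cons c B =>
        have hm : B.length < m := by simp at hlen; omega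
        rcases lt_or_gt_of_ne (hdist c List.mem_cons_self) with hlt | hgt
        · obtain ⟨B', ρ, hstd, hlen', hrun⟩ := ih B.length hm B rfl
            (fun d hd => hdist d (List.mem_cons_of_mem c hd))
          refine ⟨c :: B', ρ, ?_, by simpa using hlen', fun x => ?_⟩
          · intro d hd
            rcases List.mem_cons.mp hd with rfl | hd
            · exact hlt
            · exact hstd d hd
          · rw [runNet_cons, runNet_cons, hrun]
        · set τ := Equiv.swap c.1 c.2 with hτ
          set B2 := B.map (fun d => (τ d.1, τ d.2)) with hB2
          have hm2 : B2.length < m := by simp [hB2] at hm ⊢; omega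
          obtain ⟨B', ρ, hstd, hlen', hrun⟩ := ih B2.length hm2 B2 rfl
            (by
              intro d hd
              simp only [hB2, List.mem_map] at hd
              obtain ⟨d0, hd0, rfl⟩ := hd
              exact fun hh => hdist d0 (List.mem_cons_of_mem c hd0) (τ.injective hh))
          refine ⟨(c.2, c.1) :: B', ρ.trans τ, ?_, ?_, fun x => ?_⟩
          · intro d hd
            rcases List.mem_cons.mp hd with rfl | hd
            · exact hgt
            · exact hstd d hd
          · simp [hB2] at hlen' ⊢; omega
          · rw [runNet_cons, hrun, runNet_cons]
            have h1 : applyComp (c.2, c.1) x = (applyComp c x) ∘ ⇑τ := applyComp_swap c x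
            rw [h1, hB2, runNet_map]
            have hcomp : ((applyComp c x) ∘ ⇑τ) ∘ ⇑τ = applyComp c x := by
              funext kk
              simp [hτ, Equiv.swap_apply_self]
            rw [hcomp]
            funext kk
            simp only [Function.comp_apply, Equiv.trans_apply, hτ, Equiv.symm_swap]

lemma applyComp_of_le {c : Fin n × Fin n} {x : Fin n → Bool} (h : x c.1 ≤ x c.2) :
    applyComp c x = x := by
  funext k
  simp only [applyComp]
  split_ifs with h1 h2
  · rw [h1]; exact min_eq_left h
  · rw [h2]; exact max_eq_right h
  · rfl

lemma applyComp_of_ge {c : Fin n × Fin n} {x : Fin n → Bool} (h : x c.2 ≤ x c.1) :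
    applyComp c x = x ∘ ⇑(Equiv.swap c.1 c.2) := by
  funext k
  simp only [applyComp, Function.comp_apply]
  by_cases h1 : k = c.1
  · have hs : Equiv.swap c.1 c.2 k = c.2 := by rw [h1, Equiv.swap_apply_left]
    simp [h1, hs, min_eq_right h]
  · by_cases h2 : k = c.2
    · have hs : Equiv.swap c.1 c.2 k = c.1 := by rw [h2, Equiv.swap_apply_right]
      simp [h1, h2, hs, max_eq_left h]
      intro hcc hx1
      rw [hcc]
      exact hx1
    · have hs : Equiv.swap c.1 c.2 k = k := Equiv.swap_apply_of_ne_of_ne h1 h2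
      simp [h1, h2, hs]

lemma ones_comp (σ : Equiv.Perm (Fin n)) (x : Fin n → Bool) : ones (x ∘ ⇑σ) = ones x := by
  unfold ones
  apply Finset.card_bij (fun a _ => σ a)
  · intro a ha
    simp only [Finset.mem_filter, Finset.mem_univ, true_and, Function.comp_apply] at ha ⊢
    exact ha
  · intro a _ b _ hab
    exact σ.injective hab
  · intro b hb
    simp only [Finset.mem_filter, Finset.mem_univ, true_and, Function.comp_apply] at hb ⊢
    exact ⟨σ.symm b, by simp [hb], by simp⟩

lemma ones_applyComp (c : Fin n × Fin n) (x : Fin n → Bool) :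
    ones (applyComp c x) = ones x := by
  rcases le_total (x c.1) (x c.2) with h | h
  · rw [applyComp_of_le h]
  · rw [applyComp_of_ge h, ones_comp]

lemma ones_runNet (C : List (Fin n × Fin n)) (x : Fin n → Bool) :
    ones (runNet C x) = ones x := by
  induction C generalizing x with
  | nil => rfl
  | cons c C ih => rw [runNet_cons, ih, ones_applyComp]

lemma runNet_fix {C : List (Fin n × Fin n)} {x : Fin n → Bool}
    (hstd : Standard C) (hx : Monotone x) : runNet C x = x := by
  induction C with
  | nil => rfl
  | cons c C ih =>
      have hle : x c.1 ≤ x c.2 := hx (hstd c List.mem_cons_self).le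
      rw [runNet_cons, applyComp_of_le hle]
      exact ih (fun d hd => hstd d (List.mem_cons_of_mem c hd))

lemma ones_lt_ones {x y : Fin n → Bool} (hx : Monotone x) (hy : Monotone y) (i : Fin n)
    (hxi : x i = false) (hyi : y i = true) : ones x < ones y := by
  have h1 : (Finset.univ.filter fun j => x j = true) ⊆ Finset.Ioi i := by
    intro j hj
    simp only [Finset.mem_filter] at hj
    rw [Finset.mem_Ioi]
    by_contra hcon
    push_neg at hcon
    have := hx hcon
    rw [hj.2, hxi] at this
    exact absurd this (by simp)
  have h2 : Finset.Ici i ⊆ Finset.univ.filter fun j => y j = true := by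
    intro j hj
    rw [Finset.mem_Ici] at hj
    have := hy hj
    rw [hyi] at this
    simp only [Finset.mem_filter, Finset.mem_univ, true_and]
    exact (le_antisymm this (Bool.le_true _)).symm
  calc ones x ≤ (Finset.Ioi i).card := Finset.card_le_card h1
    _ < (Finset.Ici i).card := by
        apply Finset.card_lt_card
        rw [Finset.ssubset_iff_of_subset Finset.Ioi_subset_Ici_self]
        exact ⟨i, Finset.mem_Ici.mpr le_rfl, by simp⟩
    _ ≤ ones y := Finset.card_le_card h2

lemma monotone_bool_eq {x y : Fin n → Bool} (hx : Monotone x) (hy : Monotone y)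
    (h : ones x = ones y) : x = y := by
  funext i
  rcases Bool.eq_false_or_eq_true (x i) with hxi | hxi <;>
    rcases Bool.eq_false_or_eq_true (y i) with hyi | hyi
  · rw [hxi, hyi]
  · exact absurd h.symm (Nat.ne_of_lt (ones_lt_ones hy hx i hyi hxi))
  · exact absurd h (Nat.ne_of_lt (ones_lt_ones hx hy i hxi hyi))
  · rw [hxi, hyi]

lemma monotone_indicator (k0 : Fin n) : Monotone (fun i : Fin n => decide (k0 ≤ i)) := by
  intro a b hab
  by_cases hh : k0 ≤ a
  · simp [hh, hh.trans hab]
  · simp [hh]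

end Aux

/-- If `Ca` and `Cb` have the same size and `Ca` subsumes `Cb`, then any size-`k`
sorting network extending `Cb` yields a size-`k` sorting network extending `Ca`. -/
theorem subsumption_preserves_extension (n k : ℕ) (Ca Cb : List (Fin n × Fin n))
    (hCa : Standard Ca) (hCb : Standard Cb) (hlen : Ca.length = Cb.length)
    (hsub : Subsumes Ca Cb)
    (h : ∃ C : List (Fin n × Fin n), IsSortingNet (Cb ++ C) ∧ (Cb ++ C).length = k) :
    ∃ C' : List (Fin n × Fin n), IsSortingNet (Ca ++ C') ∧ (Ca ++ C').length = k := by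
  obtain ⟨π, hπ⟩ := hsub
  obtain ⟨C, ⟨hstd, hsort⟩, hk⟩ := h
  have hstdC : Standard C := fun c hc => hstd c (List.mem_append_right _ hc)
  set D := C.map (fun c => (π.symm c.1, π.symm c.2)) with hD
  have hdist : ∀ c ∈ D, c.1 ≠ c.2 := by
    intro c hc
    simp only [hD, List.mem_map] at hc
    obtain ⟨d, hd, rfl⟩ := hc
    exact fun hh => (ne_of_lt (hstdC d hd)) (π.symm.injective hh)
  obtain ⟨C', ρ, hC'std, hC'len, hrun⟩ := untangle D.length D rfl hdist
  have hstdAll : Standard (Ca ++ C') := by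
    intro c hc
    rcases List.mem_append.mp hc with hc | hc
    · exact hCa c hc
    · exact hC'std c hc
  have key : ∀ x : Fin n → Bool, ∃ s : Fin n → Bool, Monotone s ∧ ones s = ones x ∧
      runNet (Ca ++ C') x = fun kk => s (π (ρ kk)) := by
    intro x
    set v := runNet Ca x with hv
    have hmem : v ∘ ⇑π.symm ∈ outputs Cb := hπ ⟨v, ⟨x, rfl⟩, rfl⟩
    obtain ⟨y, hy⟩ := hmem
    refine ⟨runNet (Cb ++ C) y, hsort y, ?_, ?_⟩
    · rw [runNet_append, hy, ones_runNet, ones_comp, hv, ones_runNet]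
    · rw [runNet_append, hrun v, hD, runNet_map, runNet_append, hy]
      funext kk
      simp
  have hid : ∀ kk : Fin n, π (ρ kk) = kk := by
    have hfix : ∀ x : Fin n → Bool, Monotone x → ∀ kk, x (π (ρ kk)) = x kk := by
      intro x hx kk
      obtain ⟨s, hs, hones, hrs⟩ := key x
      have h1 : runNet (Ca ++ C') x = x := runNet_fix hstdAll hx
      have h2 : s = x := monotone_bool_eq hs hx hones
      have h3 := congrFun (h1.symm.trans hrs) kk
      rw [h2] at h3
      exact h3.symm
    intro kk
    have h1 := hfix (fun i => decide (kk ≤ i)) (monotone_indicator kk) kk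
    have h2 := hfix (fun i => decide (π (ρ kk) ≤ i)) (monotone_indicator _) kk
    have hle1 : kk ≤ π (ρ kk) := by simpa using h1
    have hle2 : π (ρ kk) ≤ kk := by simpa using h2.symm
    exact le_antisymm hle2 hle1
  refine ⟨C', ⟨hstdAll, ?_⟩, ?_⟩
  · intro x
    obtain ⟨s, hs, -, hrs⟩ := key x
    rw [hrs]
    have heq : (fun kk => s (π (ρ kk))) = s := funext fun kk => by rw [hid kk]
    rw [heq]
    exact hs
  · rw [List.length_append, hC'len, hD, List.length_map, hlen, ← List.length_append, hk]
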